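/- Let L be the Laplacian matrix of a connected undirected graph on N ≥ 2 vertices, partitioned as [[L₁₁, L_{1,2:N}], [L_{1,2:N}ᵀ, L_{2:N,2:N}]] with L₁₁ ∈ ℝ, and let L̄ = L_{2:N,2:N} − 𝟙_{N−1} L_{1,2:N}. Then the matrix −L̄ is Hurwitz, i.e. every (complex) eigenvalue of −L̄ has strictly negative real part. -/

import Mathlib

open Matrix Finset

set_option maxHeartbeats 1000000

lemma aux_exists_eigenvector {n : Type*} [Fintype n] [DecidableEq n]
    (M : Matrix n n ℂ) (μ : ℂ) (h : μ ∈ spectrum ℂ M) :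
    ∃ v : n → ℂ, v ≠ 0 ∧ M *ᵥ v = μ • v := by
  rw [spectrum.mem_iff, Matrix.isUnit_iff_isUnit_det, isUnit_iff_ne_zero, not_ne_iff] at h
  obtain ⟨v, hv0, hv⟩ := (Matrix.exists_mulVec_eq_zero_iff).mpr h
  refine ⟨v, hv0, ?_⟩
  have h1 : (algebraMap ℂ (Matrix n n ℂ) μ) *ᵥ v - M *ᵥ v = 0 := by
    rw [← Matrix.sub_mulVec]; exact hv
  have h2 : (algebraMap ℂ (Matrix n n ℂ) μ) *ᵥ v = μ • v := by
    rw [Algebra.algebraMap_eq_smul_one, Matrix.smul_mulVec, Matrix.one_mulVec]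
  rw [h2, sub_eq_zero] at h1
  exact h1.symm

lemma aux_mem_spectrum_transpose {n : Type*} [Fintype n] [DecidableEq n]
    (M : Matrix n n ℂ) (μ : ℂ) (h : μ ∈ spectrum ℂ M) : μ ∈ spectrum ℂ Mᵀ := by
  rw [spectrum.mem_iff, Matrix.isUnit_iff_isUnit_det] at h ⊢
  have : algebraMap ℂ (Matrix n n ℂ) μ - Mᵀ = (algebraMap ℂ (Matrix n n ℂ) μ - M)ᵀ := by
    rw [Matrix.transpose_sub, Algebra.algebraMap_eq_smul_one, Matrix.transpose_smul,
      Matrix.transpose_one]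
  rw [this, Matrix.det_transpose]
  exact h

lemma aux_quad_im {n : Type*} [Fintype n] (A : Matrix n n ℝ)
    (hs : ∀ a b, A a b = A b a) (w : n → ℂ) :
    (∑ k, ∑ l, ((A k l : ℂ) * ((starRingEnd ℂ) (w k) * w l))).im = 0 := by
  have him : ∀ k l, (((A k l : ℂ)) * ((starRingEnd ℂ) (w k) * w l)).im
      = A k l * ((w k).re * (w l).im - (w k).im * (w l).re) := by
    intro k l
    simp only [Complex.mul_im, Complex.mul_re, Complex.ofReal_re, Complex.ofReal_im,
      Complex.conj_re, Complex.conj_im]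
    ring
  have h1 : (∑ k, ∑ l, ((A k l : ℂ) * ((starRingEnd ℂ) (w k) * w l))).im
      = ∑ k, ∑ l, A k l * ((w k).re * (w l).im - (w k).im * (w l).re) := by
    rw [Complex.im_sum]
    refine Finset.sum_congr rfl fun k _ => ?_
    rw [Complex.im_sum]
    exact Finset.sum_congr rfl fun l _ => him k l
  rw [h1]
  have h3 : ∀ l k : n, A k l * ((w k).re * (w l).im - (w k).im * (w l).re)
      = -(A l k * ((w l).re * (w k).im - (w l).im * (w k).re)) := by
    intro l k; rw [hs k l]; ring
  have h4 : ∑ k, ∑ l, A k l * ((w k).re * (w l).im - (w k).im * (w l).re)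
      = -∑ k, ∑ l, A k l * ((w k).re * (w l).im - (w k).im * (w l).re) := by
    nth_rewrite 1 [Finset.sum_comm]
    rw [← Finset.sum_neg_distrib]
    refine Finset.sum_congr rfl fun l _ => ?_
    rw [← Finset.sum_neg_distrib]
    exact Finset.sum_congr rfl fun k _ => h3 l k
  linarith [h4]

lemma aux_quad_re {n : Type*} [Fintype n] (A : Matrix n n ℝ)
    (hpsd : A.PosSemidef) (w : n → ℂ) :
    0 ≤ (∑ k, ∑ l, ((A k l : ℂ) * ((starRingEnd ℂ) (w k) * w l))).re := by
  have hre : ∀ k l, (((A k l : ℂ)) * ((starRingEnd ℂ) (w k) * w l)).re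
      = A k l * ((w k).re * (w l).re) + A k l * ((w k).im * (w l).im) := by
    intro k l
    simp only [Complex.mul_re, Complex.mul_im, Complex.ofReal_re, Complex.ofReal_im,
      Complex.conj_re, Complex.conj_im]
    ring
  have h1 : (∑ k, ∑ l, ((A k l : ℂ) * ((starRingEnd ℂ) (w k) * w l))).re
      = (∑ k, ∑ l, A k l * ((w k).re * (w l).re))
        + ∑ k, ∑ l, A k l * ((w k).im * (w l).im) := by
    rw [Complex.re_sum, ← Finset.sum_add_distrib]
    refine Finset.sum_congr rfl fun k _ => ?_
    rw [Complex.re_sum, ← Finset.sum_add_distrib]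
    exact Finset.sum_congr rfl fun l _ => hre k l
  rw [h1]
  have key : ∀ x : n → ℝ, 0 ≤ ∑ k, ∑ l, A k l * (x k * x l) := by
    intro x
    have h := hpsd.dotProduct_mulVec_nonneg x
    rw [star_trivial] at h
    have e : dotProduct x (A *ᵥ x) = ∑ k, ∑ l, A k l * (x k * x l) := by
      simp only [dotProduct, Matrix.mulVec, Finset.mul_sum]
      refine Finset.sum_congr rfl fun k _ => Finset.sum_congr rfl fun l _ => ?_
      ring
    rw [e] at h
    exact h
  have h2 := key (fun k => (w k).re)
  have h3 := key (fun k => (w k).im)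
  positivity

lemma aux_key (m : ℕ) (A : Matrix (Fin (m + 1)) (Fin (m + 1)) ℝ)
    (hs : ∀ a b, A a b = A b a)
    (hrow : ∀ a, ∑ b, A a b = 0)
    (hpsd : A.PosSemidef)
    (hker : ∀ x : Fin (m + 1) → ℝ, A *ᵥ x = 0 → ∀ i j, x i = x j)
    (ν : ℂ) (v : Fin m → ℂ) (hv0 : v ≠ 0)
    (hEig : ∀ j, ∑ i, (((A i.succ j.succ : ℝ) : ℂ) - ((A 0 j.succ : ℝ) : ℂ)) * v i = ν * v j) :
    0 < ν.re ∧ ν.im = 0 := by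
  set Lc : Matrix (Fin (m + 1)) (Fin (m + 1)) ℂ := fun a b => ((A a b : ℝ) : ℂ) with hLcdef
  have hsym : ∀ a b, Lc a b = Lc b a := by intro a b; simp [hLcdef, hs a b]
  have hrowC : ∀ a, ∑ b, Lc a b = 0 := by
    intro a
    have h := hrow a
    simp only [hLcdef]
    rw [← Complex.ofReal_sum, h, Complex.ofReal_zero]
  have hrow' : ∀ a, ∑ j : Fin m, Lc a j.succ = -Lc a 0 := by
    intro a
    have h := hrowC a
    rw [Fin.sum_univ_succ] at h
    linear_combination h
  have hEig' : ∀ j : Fin m, ∑ i : Fin m, (Lc i.succ j.succ - Lc 0 j.succ) * v i = ν * v j := hEig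
  set w : Fin (m + 1) → ℂ := Fin.cons (-(∑ i, v i)) v with hw
  have hwsucc : ∀ i : Fin m, w i.succ = v i := fun i => by simp [hw]
  have hwzero : w 0 = -(∑ i, v i) := by simp [hw]
  have hsum : ∑ i : Fin m, (Lc 0 0 - Lc i.succ 0) * v i = ν * ∑ i : Fin m, v i := by
    calc ∑ i : Fin m, (Lc 0 0 - Lc i.succ 0) * v i
        = ∑ i : Fin m, ∑ j : Fin m, (Lc i.succ j.succ - Lc 0 j.succ) * v i := by
          refine Finset.sum_congr rfl fun i _ => ?_
          rw [← Finset.sum_mul]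
          congr 1
          rw [Finset.sum_sub_distrib, hrow' i.succ, hrow' 0]
          ring
      _ = ∑ j : Fin m, ∑ i : Fin m, (Lc i.succ j.succ - Lc 0 j.succ) * v i := by
          rw [Finset.sum_comm]
      _ = ∑ j : Fin m, ν * v j := Finset.sum_congr rfl fun j _ => hEig' j
      _ = ν * ∑ j : Fin m, v j := by rw [Finset.mul_sum]
  have hLw : ∀ k, ∑ l, Lc k l * w l = ν * w k := by
    intro k
    induction k using Fin.cases with
    | zero =>
      rw [Fin.sum_univ_succ, hwzero]
      simp only [hwsucc]
      have e1 : ∑ i : Fin m, (Lc 0 0 - Lc i.succ 0) * v i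
          = Lc 0 0 * ∑ i : Fin m, v i - ∑ i : Fin m, Lc i.succ 0 * v i := by
        simp only [sub_mul]
        rw [Finset.sum_sub_distrib, ← Finset.mul_sum]
      have e2 : ∑ i : Fin m, Lc 0 i.succ * v i = ∑ i : Fin m, Lc i.succ 0 * v i :=
        Finset.sum_congr rfl fun i _ => by rw [hsym 0 i.succ]
      rw [e2]
      rw [e1] at hsum
      linear_combination -hsum
    | succ j =>
      rw [Fin.sum_univ_succ, hwzero]
      simp only [hwsucc]
      have e2 : ∑ i : Fin m, Lc j.succ i.succ * v i
          = ∑ i : Fin m, (Lc i.succ j.succ - Lc 0 j.succ) * v i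
            + Lc 0 j.succ * ∑ i : Fin m, v i := by
        simp only [sub_mul]
        rw [Finset.sum_sub_distrib, ← Finset.mul_sum]
        have hh : ∀ i : Fin m, Lc j.succ i.succ * v i = Lc i.succ j.succ * v i := fun i => by
          rw [hsym j.succ i.succ]
        rw [Finset.sum_congr rfl fun i _ => hh i]
        ring
      rw [e2, hEig' j, hsym j.succ 0]
      ring
  have hQ : ∑ k, ∑ l, (Lc k l * ((starRingEnd ℂ) (w k) * w l))
      = ν * ∑ k, ((Complex.normSq (w k) : ℝ) : ℂ) := by
    calc ∑ k, ∑ l, (Lc k l * ((starRingEnd ℂ) (w k) * w l))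
        = ∑ k, (starRingEnd ℂ) (w k) * ∑ l, Lc k l * w l := by
          refine Finset.sum_congr rfl fun k _ => ?_
          rw [Finset.mul_sum]
          exact Finset.sum_congr rfl fun l _ => by ring
      _ = ∑ k, (starRingEnd ℂ) (w k) * (ν * w k) := by
          refine Finset.sum_congr rfl fun k _ => ?_
          rw [hLw k]
      _ = ν * ∑ k, ((Complex.normSq (w k) : ℝ) : ℂ) := by
          rw [Finset.mul_sum]
          refine Finset.sum_congr rfl fun k _ => ?_
          have hns : ((Complex.normSq (w k) : ℝ) : ℂ) = (starRingEnd ℂ) (w k) * w k :=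
            Complex.normSq_eq_conj_mul_self
          rw [hns]
          ring
  have hS_pos : 0 < ∑ k, Complex.normSq (w k) := by
    have hex : ∃ i, v i ≠ 0 := by
      by_contra hc
      push_neg at hc
      exact hv0 (funext hc)
    obtain ⟨i, hi⟩ := hex
    refine Finset.sum_pos' (fun k _ => Complex.normSq_nonneg _) ⟨i.succ, Finset.mem_univ _, ?_⟩
    rw [hwsucc i]
    exact Complex.normSq_pos.mpr hi
  set S : ℝ := ∑ k, Complex.normSq (w k) with hSdef
  have hQS : ∑ k, ∑ l, (Lc k l * ((starRingEnd ℂ) (w k) * w l)) = ν * (S : ℂ) := by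
    rw [hQ, hSdef, Complex.ofReal_sum]
  have hQim : (ν * (S : ℂ)).im = 0 := by
    rw [← hQS]; exact aux_quad_im A hs w
  have hQre : 0 ≤ (ν * (S : ℂ)).re := by
    rw [← hQS]; exact aux_quad_re A hpsd w
  have hνim : ν.im = 0 := by
    have h : ν.im * S = 0 := by
      have h2 := hQim
      simp only [Complex.mul_im, Complex.ofReal_re, Complex.ofReal_im, mul_zero,
        zero_add, add_zero] at h2
      linarith [h2]
    rcases mul_eq_zero.mp h with h | h
    · exact h
    · exact absurd h (ne_of_gt hS_pos)
  have hνre : 0 ≤ ν.re := by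
    have h : 0 ≤ ν.re * S := by
      have h2 := hQre
      simp only [Complex.mul_re, Complex.ofReal_re, Complex.ofReal_im, mul_zero,
        sub_zero] at h2
      linarith [h2]
    nlinarith [hS_pos]
  have hνne : ν ≠ 0 := by
    intro hν0
    have hker' : ∀ k, ∑ l, Lc k l * w l = 0 := by
      intro k; rw [hLw k, hν0, zero_mul]
    have hx : A *ᵥ (fun k => (w k).re) = 0 := by
      funext k
      have h := congrArg Complex.re (hker' k)
      rw [Complex.re_sum] at h
      simp only [Complex.zero_re] at h
      simp only [Matrix.mulVec, dotProduct, Pi.zero_apply]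
      calc ∑ l, A k l * (w l).re = ∑ l, (Lc k l * w l).re :=
            Finset.sum_congr rfl fun l _ => by
              simp [hLcdef, Complex.mul_re]
        _ = 0 := h
    have hy : A *ᵥ (fun k => (w k).im) = 0 := by
      funext k
      have h := congrArg Complex.im (hker' k)
      rw [Complex.im_sum] at h
      simp only [Complex.zero_im] at h
      simp only [Matrix.mulVec, dotProduct, Pi.zero_apply]
      calc ∑ l, A k l * (w l).im = ∑ l, (Lc k l * w l).im :=
            Finset.sum_congr rfl fun l _ => by
              simp [hLcdef, Complex.mul_im]
        _ = 0 := h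
    have hconstx := hker _ hx
    have hconsty := hker _ hy
    have hwconst : ∀ k, w k = w 0 := by
      intro k
      apply Complex.ext
      · exact hconstx k 0
      · exact hconsty k 0
    have hv_eq : ∀ i : Fin m, v i = w 0 := fun i => by rw [← hwsucc i, hwconst i.succ]
    have hsv : ∑ i : Fin m, v i = (m : ℂ) * w 0 := by
      rw [Finset.sum_congr rfl fun i _ => hv_eq i]
      simp [Finset.sum_const, mul_comm]
    have hsum0 : (1 + (m : ℂ)) * w 0 = 0 := by
      have h := hwzero
      rw [hsv] at h
      linear_combination h
    have hne : (1 + (m : ℂ)) ≠ 0 := by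
      intro hc
      have h2 : ((m + 1 : ℕ) : ℂ) = 0 := by push_cast; linear_combination hc
      exact Nat.cast_ne_zero.mpr (Nat.succ_ne_zero m) h2
    have hw0 : w 0 = 0 := by
      rcases mul_eq_zero.mp hsum0 with h | h
      · exact absurd h hne
      · exact h
    apply hv0
    funext i
    rw [hv_eq i, hw0]
    rfl
  refine ⟨?_, hνim⟩
  rcases lt_or_eq_of_le hνre with h | h
  · exact h
  · exfalso
    apply hνne
    apply Complex.ext
    · exact h.symm
    · exact hνim

/-- Let `L` be the Laplacian matrix of a connected undirected graph on
`N = m+1 ≥ 2` vertices, partitioned as `[[L₁₁, L_{1,2:N}], [L_{1,2:N}ᵀ, L_{2:N,2:N}]]`, and let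
`L̄ = L_{2:N,2:N} − 𝟙_{N−1} L_{1,2:N}`, i.e. `L̄ i j = L (i+1) (j+1) − L 0 (j+1)`.
Then `−L̄` is Hurwitz: every complex eigenvalue of `−L̄` has strictly negative real part. -/
theorem stmt1_minus_Lbar_Hurwitz (m : ℕ) (hm : 1 ≤ m)
    (G : SimpleGraph (Fin (m + 1))) [DecidableRel G.Adj]
    (hconn : G.Connected)
    (L : Matrix (Fin (m + 1)) (Fin (m + 1)) ℝ)
    (hL : L = G.lapMatrix ℝ) :
    ∀ μ : ℂ,
      μ ∈ spectrum ℂ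
        ((-(Matrix.of fun i j : Fin m => L i.succ j.succ - L 0 j.succ)).map
          (algebraMap ℝ ℂ)) →
      μ.re < 0 := by
  intro μ hμ
  have hsymR : ∀ a b, L a b = L b a := by
    intro a b
    rw [hL]
    exact (G.isSymm_lapMatrix (R := ℝ)).apply b a
  have hrowR : ∀ a, ∑ b, L a b = 0 := by
    intro a
    have h0 := congrFun (G.lapMatrix_mulVec_const_eq_zero (R := ℝ)) a
    rw [hL]
    simpa [Matrix.mulVec, dotProduct] using h0
  have hpsd : L.PosSemidef := by rw [hL]; exact SimpleGraph.posSemidef_lapMatrix ℝ G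
  have hker : ∀ x : Fin (m + 1) → ℝ, L *ᵥ x = 0 → ∀ i j, x i = x j := by
    intro x hx i j
    have h : Matrix.toLin' (G.lapMatrix ℝ) x = 0 := by
      rw [Matrix.toLin'_apply, ← hL]
      exact hx
    exact (G.lapMatrix_mulVec_eq_zero_iff_forall_reachable (x := x)).mp (by rwa [Matrix.toLin'_apply] at h) i j
      (hconn.preconnected i j)
  -- transfer spectrum membership to the transpose with eigenvalue ν = -μ
  set ν : ℂ := -μ with hν
  have hν' : ν ∈ spectrum ℂ
      (((Matrix.of fun i j : Fin m => L i.succ j.succ - L 0 j.succ)).map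
        (algebraMap ℝ ℂ))ᵀ := by
    apply aux_mem_spectrum_transpose
    have hneg : ((-(Matrix.of fun i j : Fin m => L i.succ j.succ - L 0 j.succ)).map
        (algebraMap ℝ ℂ)) =
        -(((Matrix.of fun i j : Fin m => L i.succ j.succ - L 0 j.succ)).map
          (algebraMap ℝ ℂ)) := by
      ext i j; simp [Matrix.map_apply]
    rw [hneg, ← spectrum.neg_eq, Set.mem_neg] at hμ
    exact hμ
  obtain ⟨v, hv0, hv⟩ := aux_exists_eigenvector _ _ hν'
  have hEig : ∀ j : Fin m,
      ∑ i, (((L i.succ j.succ : ℝ) : ℂ) - ((L 0 j.succ : ℝ) : ℂ)) * v i = ν * v j := by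
    intro j
    have h := congrFun hv j
    simpa [Matrix.mulVec, dotProduct, Matrix.transpose_apply, Matrix.map_apply,
      map_sub] using h
  obtain ⟨hre, him⟩ := aux_key m L hsymR hrowR hpsd hker ν v hv0 hEig
  have : μ.re = -ν.re := by rw [hν]; simp
  rw [this]
  linarith
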